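/- Under the hierarchical model X | n ~ Binomial(K, q(n)), q(n) = ε/3 + (1-4ε/3)(n/N), n | θ ~ Binomial(N, θ), θ ~ (1-π₁)δ₀ + π₁·Uniform(0,a), the statistic m₂ := (X² - K²ε²/9 - K(ε/3)(1-ε/3) - K(1-2ε/3)μ₁ - K²(2ε/3)μ₁) / ((K²-K)(1-4ε/3)²), where μ₁ := E[X/K - ε/3], satisfies E[m₂] = ((N-1)/N)·π₁·(a²/3) + (1/N)·π₁·(a/2). -/

import Mathlib

open MeasureTheory intervalIntegral

lemma bern_eval (N n : ℕ) (θ : ℝ) :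
    (bernsteinPolynomial ℝ N n).eval θ = (N.choose n : ℝ) * θ ^ n * (1 - θ) ^ (N - n) := by
  simp [bernsteinPolynomial]

lemma bern0 (N : ℕ) (θ : ℝ) :
    ∑ n ∈ Finset.range (N + 1), (N.choose n : ℝ) * θ ^ n * (1 - θ) ^ (N - n) = 1 := by
  have := congrArg (Polynomial.eval θ) (bernsteinPolynomial.sum ℝ N)
  simpa [Polynomial.eval_finset_sum, bern_eval] using this

lemma bern1 (N : ℕ) (θ : ℝ) :
    ∑ n ∈ Finset.range (N + 1), (n : ℝ) * ((N.choose n : ℝ) * θ ^ n * (1 - θ) ^ (N - n))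
      = N * θ := by
  have := congrArg (Polynomial.eval θ) (bernsteinPolynomial.sum_smul ℝ N)
  simpa [Polynomial.eval_finset_sum, bern_eval] using this

lemma bern2 (N : ℕ) (hN : 1 ≤ N) (θ : ℝ) :
    ∑ n ∈ Finset.range (N + 1),
        ((n : ℝ) * ((n : ℝ) - 1)) * ((N.choose n : ℝ) * θ ^ n * (1 - θ) ^ (N - n))
      = (N : ℝ) * ((N : ℝ) - 1) * θ ^ 2 := by
  have h2 := congrArg (Polynomial.eval θ) (bernsteinPolynomial.sum_mul_smul ℝ N)
  simp [Polynomial.eval_finset_sum, bern_eval] at h2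
  calc ∑ n ∈ Finset.range (N + 1),
        ((n : ℝ) * ((n : ℝ) - 1)) * ((N.choose n : ℝ) * θ ^ n * (1 - θ) ^ (N - n))
      = ∑ n ∈ Finset.range (N + 1),
        ((n : ℝ) * ((n - 1 : ℕ) : ℝ)) * ((N.choose n : ℝ) * θ ^ n * (1 - θ) ^ (N - n)) := by
        apply Finset.sum_congr rfl
        intro n _
        rcases n with _ | m
        · simp
        · push_cast [Nat.succ_sub_one]; ring
    _ = (N : ℝ) * (((N - 1 : ℕ)) : ℝ) * θ ^ 2 := h2
    _ = (N : ℝ) * ((N : ℝ) - 1) * θ ^ 2 := by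
        rw [Nat.cast_sub hN]; norm_num

lemma poly_integral (a c₀ c₁ c₂ : ℝ) :
    ∫ θ in (0:ℝ)..a, (c₀ + c₁ * θ + c₂ * θ ^ 2) = c₀ * a + c₁ * (a ^ 2 / 2) + c₂ * (a ^ 3 / 3) := by
  have i1 : IntervalIntegrable (fun _ : ℝ => c₀) volume 0 a := intervalIntegrable_const
  have i2 : IntervalIntegrable (fun θ : ℝ => c₁ * θ) volume 0 a :=
    (continuous_const.mul continuous_id).intervalIntegrable 0 a
  have i3 : IntervalIntegrable (fun θ : ℝ => c₂ * θ ^ 2) volume 0 a :=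
    (continuous_const.mul (continuous_pow 2)).intervalIntegrable 0 a
  rw [integral_add (i1.add i2) i3, integral_add i1 i2, intervalIntegral.integral_const,
    intervalIntegral.integral_const_mul, intervalIntegral.integral_const_mul, integral_id, integral_pow]
  push_cast [smul_eq_mul]; ring

set_option maxHeartbeats 2000000 in
theorem second_moment_statistic
    (N K : ℕ) (hN : 1 ≤ N) (hK : 2 ≤ K) (ε a π₁ : ℝ)
    (hε : 0 ≤ ε) (hε' : ε < 3 / 4) (ha : 0 < a) (ha' : a < 1)
    (hπ : 0 < π₁) (hπ' : π₁ < 1)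
    (q : ℕ → ℝ) (hq : ∀ n, q n = ε / 3 + (1 - 4 * ε / 3) * (n / N))
    (h : ℝ → ℝ)
    (hh : ∀ θ, h θ = ∑ n ∈ Finset.range (N + 1),
        (N.choose n : ℝ) * θ ^ n * (1 - θ) ^ (N - n) *
          ((K : ℝ) * q n * (1 - q n) + (K : ℝ) ^ 2 * q n ^ 2))
    (μ₁ : ℝ) (hμ₁ : μ₁ = (1 - 4 * ε / 3) * π₁ * (a / 2))
    (m₂ : ℝ → ℝ)
    (hm₂ : ∀ θ, m₂ θ =
      (h θ - (K : ℝ) ^ 2 * ε ^ 2 / 9 - (K : ℝ) * (ε / 3) * (1 - ε / 3)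
          - (K : ℝ) * (1 - 2 * ε / 3) * μ₁ - (K : ℝ) ^ 2 * (2 * ε / 3) * μ₁)
        / (((K : ℝ) ^ 2 - K) * (1 - 4 * ε / 3) ^ 2)) :
    (1 - π₁) * m₂ 0 + π₁ * ((1 / a) * ∫ θ in (0:ℝ)..a, m₂ θ)
      = ((N : ℝ) - 1) / N * π₁ * (a ^ 2 / 3) + (1 / N) * π₁ * (a / 2) := by
  have hN0 : (N : ℝ) ≠ 0 := by positivity
  have hKr : (2 : ℝ) ≤ (K : ℝ) := by exact_mod_cast hK
  have hc : (0 : ℝ) < 1 - 4 * ε / 3 := by linarith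
  have hD : ((K : ℝ) ^ 2 - K) * (1 - 4 * ε / 3) ^ 2 ≠ 0 := by
    have : (0 : ℝ) < (K : ℝ) ^ 2 - K := by nlinarith
    positivity
  -- abbreviations
  set e := ε / 3 with he
  set c := 1 - 4 * ε / 3 with hcdef
  set KK := ((K : ℝ) ^ 2 - (K : ℝ)) with hKK
  -- coefficients in the n-expansion
  set α := (K : ℝ) * e + KK * e ^ 2 with hα
  set β := (K : ℝ) * c / N + KK * (2 * e * c / N + c ^ 2 / (N : ℝ) ^ 2) with hβ
  set γ := KK * c ^ 2 / (N : ℝ) ^ 2 with hγ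
  have key : ∀ θ : ℝ, h θ = α + β * ((N : ℝ) * θ) + γ * ((N : ℝ) * ((N : ℝ) - 1) * θ ^ 2) := by
    intro θ
    have s0 := bern0 N θ
    have s1 := bern1 N θ
    have s2 := bern2 N hN θ
    calc h θ = α * (∑ n ∈ Finset.range (N + 1), (N.choose n : ℝ) * θ ^ n * (1 - θ) ^ (N - n))
        + β * (∑ n ∈ Finset.range (N + 1), (n : ℝ) * ((N.choose n : ℝ) * θ ^ n * (1 - θ) ^ (N - n)))
        + γ * (∑ n ∈ Finset.range (N + 1),
            ((n : ℝ) * ((n : ℝ) - 1)) * ((N.choose n : ℝ) * θ ^ n * (1 - θ) ^ (N - n))) := by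
          rw [hh θ, Finset.mul_sum, Finset.mul_sum, Finset.mul_sum, ← Finset.sum_add_distrib,
            ← Finset.sum_add_distrib]
          apply Finset.sum_congr rfl
          intro n _
          rw [hq n]
          ring
      _ = α + β * ((N : ℝ) * θ) + γ * ((N : ℝ) * ((N : ℝ) - 1) * θ ^ 2) := by
          rw [s0, s1, s2]; ring
  set κ := (K : ℝ) ^ 2 * ε ^ 2 / 9 + (K : ℝ) * (ε / 3) * (1 - ε / 3)
      + (K : ℝ) * (1 - 2 * ε / 3) * μ₁ + (K : ℝ) ^ 2 * (2 * ε / 3) * μ₁ with hκ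
  set D := ((K : ℝ) ^ 2 - (K : ℝ)) * (1 - 4 * ε / 3) ^ 2 with hDdef
  have hm₂' : ∀ θ : ℝ, m₂ θ = (α - κ) / D + (β * (N : ℝ) / D) * θ
      + (γ * (N : ℝ) * ((N : ℝ) - 1) / D) * θ ^ 2 := by
    intro θ
    rw [hm₂ θ, key θ]
    ring
  have hI : (∫ θ in (0:ℝ)..a, m₂ θ)
      = (α - κ) / D * a + (β * (N : ℝ) / D) * (a ^ 2 / 2)
        + (γ * (N : ℝ) * ((N : ℝ) - 1) / D) * (a ^ 3 / 3) := by
    rw [intervalIntegral.integral_congr (g := fun θ =>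
        (α - κ) / D + (β * (N : ℝ) / D) * θ + (γ * (N : ℝ) * ((N : ℝ) - 1) / D) * θ ^ 2)
        (fun θ _ => hm₂' θ), poly_integral]
  have ha0 : a ≠ 0 := ne_of_gt ha
  have hstep : (1 - π₁) * m₂ 0 + π₁ * ((1 / a) * ∫ θ in (0:ℝ)..a, m₂ θ)
      = ((α - κ) + π₁ * (β * (N : ℝ)) * (a / 2)
          + π₁ * (γ * (N : ℝ) * ((N : ℝ) - 1)) * (a ^ 2 / 3)) / D := by
    rw [hm₂' 0, hI]
    field_simp
    ring
  have hnum : (α - κ) + π₁ * (β * (N : ℝ)) * (a / 2)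
      + π₁ * (γ * (N : ℝ) * ((N : ℝ) - 1)) * (a ^ 2 / 3)
      = D * (((N : ℝ) - 1) / N * π₁ * (a ^ 2 / 3) + (1 / N) * π₁ * (a / 2)) := by
    rw [hα, hβ, hγ, hκ, hμ₁, hKK, hDdef, hcdef, he]
    field_simp
    ring
  rw [hstep, hnum]
  exact mul_div_cancel_left₀ _ hD
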